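/- arXiv:0911.3687 — 4 statements merged into one kernel-verified Lean document; each statement's English description precedes it below -/
import Mathlib

section
/- Let 0 < d < 1, λ± = (1±√d)², and let n_W(E) = ∫_{−∞}^E ρ_W(x) dx be the Marchenko–Pastur distribution function, where ρ_W(x) = (1/(2πd))·√(max(0,(λ₊−x)(x−λ₋)))/x. Then there is a constant C (depending on d) such that for all t ∈ (λ₋, λ₊) and all s ∈ [0,1], |t − n_W⁻¹(s)| ≤ C·|n_W(t) − s|^{2/3}, where n_W⁻¹ is the generalized inverse with n_W⁻¹(0) = λ₋ and n_W⁻¹(1) = λ₊. -/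
open MeasureTheory Set

set_option maxHeartbeats 1000000 in
private lemma mp_aux (d : ℝ) (hd0 : 0 < d) (hd1 : d < 1) :
    ∃ C : ℝ, 0 < C ∧ ∀ t ∈ Set.Ioo ((1 - Real.sqrt d) ^ 2) ((1 + Real.sqrt d) ^ 2),
      ∀ s ∈ Set.Icc (0 : ℝ) 1,
      ∀ q ∈ Set.Icc ((1 - Real.sqrt d) ^ 2) ((1 + Real.sqrt d) ^ 2),
        (∫ x in Set.Iic q, (1 / (2 * Real.pi * d)) *
          Real.sqrt (max 0 (((1 + Real.sqrt d) ^ 2 - x) * (x - (1 - Real.sqrt d) ^ 2))) / x) = s →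
        |t - q| ≤ C * |(∫ x in Set.Iic t, (1 / (2 * Real.pi * d)) *
          Real.sqrt (max 0 (((1 + Real.sqrt d) ^ 2 - x) * (x - (1 - Real.sqrt d) ^ 2))) / x)
            - s| ^ ((2 : ℝ) / 3) := by
  set lm : ℝ := (1 - Real.sqrt d) ^ 2 with hlm_def
  set lp : ℝ := (1 + Real.sqrt d) ^ 2 with hlp_def
  set ρ : ℝ → ℝ := fun x => (1 / (2 * Real.pi * d)) *
      Real.sqrt (max 0 ((lp - x) * (x - lm))) / x with hρ_def
  have hπ : 0 < Real.pi := Real.pi_pos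
  have hsd0 : 0 < Real.sqrt d := Real.sqrt_pos.mpr hd0
  have hsd1 : Real.sqrt d < 1 := by
    have := Real.sqrt_lt_sqrt hd0.le hd1
    rwa [Real.sqrt_one] at this
  have hsq : Real.sqrt d ^ 2 = d := Real.sq_sqrt hd0.le
  have hlm0 : 0 < lm := by
    have : 0 < 1 - Real.sqrt d := by linarith
    positivity
  have hlp_eq : lp = 1 + 2 * Real.sqrt d + d := by rw [hlp_def]; nlinarith [hsq]
  have hlm_eq : lm = 1 - 2 * Real.sqrt d + d := by rw [hlm_def]; nlinarith [hsq]
  have hlmlp : lm < lp := by rw [hlm_eq, hlp_eq]; linarith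
  have hlp0 : 0 < lp := lt_trans hlm0 hlmlp
  -- nonnegativity of ρ
  have hρ0 : ∀ x, 0 ≤ ρ x := by
    intro x
    rcases le_or_gt x 0 with hx | hx
    · have hp : (lp - x) * (x - lm) ≤ 0 :=
        mul_nonpos_of_nonneg_of_nonpos (by linarith) (by linarith)
      have : max 0 ((lp - x) * (x - lm)) = 0 := max_eq_left hp
      simp [hρ_def, this]
    · have h1 : 0 ≤ (1 / (2 * Real.pi * d)) * Real.sqrt (max 0 ((lp - x) * (x - lm))) := by
        positivity
      exact div_nonneg h1 hx.le
  -- ρ vanishes outside [lm, lp]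
  have hρzero : ∀ x, x ∉ Set.Icc lm lp → ρ x = 0 := by
    intro x hx
    have hp : (lp - x) * (x - lm) ≤ 0 := by
      rcases not_and_or.mp hx with h | h
      · push_neg at h
        exact mul_nonpos_of_nonneg_of_nonpos (by linarith) (by linarith)
      · push_neg at h
        exact mul_nonpos_of_nonpos_of_nonneg (by linarith) (by linarith)
    have : max 0 ((lp - x) * (x - lm)) = 0 := max_eq_left hp
    simp [hρ_def, this]
  -- integrability
  have hcont : ContinuousOn ρ (Set.Icc lm lp) := by
    apply ContinuousOn.div
    · refine Continuous.continuousOn (continuous_const.mul (Real.continuous_sqrt.comp ?_))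
      exact continuous_const.max (((continuous_const.sub continuous_id).mul
        (continuous_id.sub continuous_const)))
    · exact continuousOn_id
    · intro x hx; exact ne_of_gt (lt_of_lt_of_le hlm0 hx.1)
  have hintIcc : IntegrableOn ρ (Set.Icc lm lp) := hcont.integrableOn_Icc
  have hρeq : ρ = (Set.Icc lm lp).indicator ρ := by
    funext x
    by_cases hx : x ∈ Set.Icc lm lp
    · rw [Set.indicator_of_mem hx]
    · rw [Set.indicator_of_notMem hx, hρzero x hx]
  have hρint : Integrable ρ := by
    rw [hρeq]; exact hintIcc.integrable_indicator measurableSet_Icc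
  -- key constants
  set c1 : ℝ := (1 / (2 * Real.pi * d)) * Real.sqrt (Real.sqrt d / 2) / (4 * lp) with hc1_def
  have hc10 : 0 < c1 := by
    have : 0 < Real.sqrt (Real.sqrt d / 2) := Real.sqrt_pos.mpr (by positivity)
    positivity
  have rpow32 : ∀ y : ℝ, 0 ≤ y → y ^ ((3 : ℝ)/2) = Real.sqrt y * y := by
    intro y hy
    rw [show (3 : ℝ)/2 = 1/2 + 1 by norm_num, Real.rpow_add' hy (by norm_num),
      Real.rpow_one, ← Real.sqrt_eq_rpow]
  -- key integral lower bound
  have key : ∀ a b : ℝ, lm ≤ a → b ≤ lp → a ≤ b →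
      c1 * (b - a) ^ ((3 : ℝ)/2) ≤ ∫ x in Set.Ioc a b, ρ x := by
    intro a b ha hb hab
    set L := b - a with hLdef
    have hL0 : 0 ≤ L := by rw [hLdef]; linarith
    rcases eq_or_lt_of_le hL0 with hL | hL
    · rw [← hL, Real.zero_rpow (by norm_num), mul_zero]
      exact setIntegral_nonneg measurableSet_Ioc fun x _ => hρ0 x
    -- choose subinterval [u, v] with v - u = L/4
    have hsub : ∃ u v : ℝ, a ≤ u ∧ v ≤ b ∧ v - u = L/4 ∧
        (∀ x ∈ Set.Ioc u v, 0 < x ∧ x ≤ lp ∧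
          Real.sqrt d * L / 2 ≤ (lp - x) * (x - lm)) := by
      by_cases hmid : (a + b)/2 ≤ 1 + d
      · refine ⟨a + L/4, a + L/2, by linarith, by rw [hLdef]; linarith, by ring, ?_⟩
        intro x hx
        obtain ⟨hx1, hx2⟩ := hx
        have hxlm : lm + L/4 ≤ x := by linarith
        have hx0 : 0 < x := lt_of_lt_of_le hlm0 (by linarith)
        have hxlp : x ≤ lp := by
          have hxm : x ≤ (a + b)/2 := by rw [hLdef] at hx2; linarith
          rw [hlp_eq]; linarith
        refine ⟨hx0, hxlp, ?_⟩
        have e1 : 2 * Real.sqrt d ≤ lp - x := by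
          have : x ≤ 1 + d := le_trans (by rw [hLdef] at hx2; linarith) hmid
          rw [hlp_eq]; linarith
        have e2 : L/4 ≤ x - lm := by linarith
        nlinarith [hsd0.le, hL.le]
      · push_neg at hmid
        refine ⟨a + L/2, a + 3*L/4, by linarith, by rw [hLdef]; linarith, by ring, ?_⟩
        intro x hx
        obtain ⟨hx1, hx2⟩ := hx
        have hx0 : 0 < x := lt_of_lt_of_le hlm0 (by linarith)
        have hxlp : x ≤ lp := by
          have : x ≤ b := by rw [hLdef] at hx2; linarith
          linarith
        refine ⟨hx0, hxlp, ?_⟩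
        have e1 : 2 * Real.sqrt d ≤ x - lm := by
          have : (a + b)/2 < x := by rw [hLdef] at hx1; linarith
          rw [hlm_eq]; linarith
        have e2 : L/4 ≤ lp - x := by
          have : x ≤ b - L/4 := by linarith
          linarith
        nlinarith [hsd0.le, hL.le]
    obtain ⟨u, v, hau, hvb, huv, hbound⟩ := hsub
    set c : ℝ := (1 / (2 * Real.pi * d)) * Real.sqrt (Real.sqrt d * L / 2) / lp with hc_def
    have hpt : ∀ x ∈ Set.Ioc u v, c ≤ ρ x := by
      intro x hx
      obtain ⟨hx0, hxlp, hprod⟩ := hbound x hx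
      have h1 : Real.sqrt (Real.sqrt d * L / 2) ≤
          Real.sqrt (max 0 ((lp - x) * (x - lm))) :=
        Real.sqrt_le_sqrt (le_trans hprod (le_max_right _ _))
      have h2 : (1 / (2 * Real.pi * d)) * Real.sqrt (Real.sqrt d * L / 2) ≤
          (1 / (2 * Real.pi * d)) * Real.sqrt (max 0 ((lp - x) * (x - lm))) := by
        apply mul_le_mul_of_nonneg_left h1; positivity
      calc c ≤ (1 / (2 * Real.pi * d)) * Real.sqrt (max 0 ((lp - x) * (x - lm))) / lp := by
              rw [hc_def]; apply div_le_div_of_nonneg_right h2 hlp0.le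
        _ ≤ ρ x := by
              rw [hρ_def]
              apply div_le_div_of_nonneg_left (by positivity) hx0 hxlp
    have hstep2 : c * (L/4) ≤ ∫ x in Set.Ioc u v, ρ x := by
      have := setIntegral_ge_of_const_le (μ := volume) measurableSet_Ioc
        (by simp [Real.volume_Ioc]) hpt hρint.integrableOn
      rwa [Real.volume_real_Ioc_of_le (by linarith), huv, smul_eq_mul, mul_comm] at this
    have hstep3 : (∫ x in Set.Ioc u v, ρ x) ≤ ∫ x in Set.Ioc a b, ρ x := by
      apply setIntegral_mono_set hρint.integrableOn (ae_of_all _ hρ0)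
      exact HasSubset.Subset.eventuallyLE (Set.Ioc_subset_Ioc hau hvb)
    refine le_trans (le_of_eq ?_) (le_trans hstep2 hstep3)
    rw [rpow32 L hL0, hc_def, hc1_def,
      show Real.sqrt d * L / 2 = (Real.sqrt d / 2) * L by ring,
      Real.sqrt_mul (by positivity) L]
    field_simp
  -- conclude
  refine ⟨(c1⁻¹) ^ ((2 : ℝ)/3), Real.rpow_pos_of_pos (by positivity) _, ?_⟩
  intro t ht s _hs q hq hqs
  subst hqs
  set nWt := ∫ x in Set.Iic t, ρ x with hnWt
  set nWq := ∫ x in Set.Iic q, ρ x with hnWq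
  have hIic : ∀ r : ℝ, IntegrableOn ρ (Set.Iic r) := fun r => hρint.integrableOn
  have hΔ : c1 * |t - q| ^ ((3 : ℝ)/2) ≤ |nWt - nWq| := by
    rcases lt_trichotomy t q with htq | htq | htq
    · have hdiff : nWq - nWt = ∫ x in Set.Ioc t q, ρ x := by
        rw [hnWq, hnWt, intervalIntegral.integral_Iic_sub_Iic (hIic t) (hIic q),
          intervalIntegral.integral_of_le htq.le]
      have hkey := key t q ht.1.le hq.2 htq.le
      rw [← hdiff] at hkey
      have habs : |t - q| = q - t := by rw [abs_sub_comm]; exact abs_of_pos (by linarith)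
      rw [habs]
      calc c1 * (q - t) ^ ((3:ℝ)/2) ≤ nWq - nWt := hkey
        _ ≤ |nWt - nWq| := by rw [abs_sub_comm]; exact le_abs_self _
    · subst htq
      simp [Real.zero_rpow (by norm_num : ((3:ℝ)/2) ≠ 0)]
    · have hdiff : nWt - nWq = ∫ x in Set.Ioc q t, ρ x := by
        rw [hnWq, hnWt, intervalIntegral.integral_Iic_sub_Iic (hIic q) (hIic t),
          intervalIntegral.integral_of_le htq.le]
      have hkey := key q t hq.1 ht.2.le htq.le
      rw [← hdiff] at hkey
      have habs : |t - q| = t - q := abs_of_pos (by linarith)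
      rw [habs]
      exact le_trans hkey (le_abs_self _)
  -- from hΔ to the Hölder bound
  set Δ := |nWt - nWq| with hΔdef
  have hΔ0 : 0 ≤ Δ := abs_nonneg _
  have h1 : (c1 * |t - q| ^ ((3:ℝ)/2)) ^ ((2:ℝ)/3) ≤ Δ ^ ((2:ℝ)/3) :=
    Real.rpow_le_rpow (by positivity) hΔ (by norm_num)
  have h2 : (c1 * |t - q| ^ ((3:ℝ)/2)) ^ ((2:ℝ)/3)
      = c1 ^ ((2:ℝ)/3) * |t - q| := by
    rw [Real.mul_rpow hc10.le (by positivity), ← Real.rpow_mul (abs_nonneg _)]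
    norm_num
  have h3 : (c1⁻¹) ^ ((2:ℝ)/3) * (c1 ^ ((2:ℝ)/3) * |t - q|) = |t - q| := by
    rw [← mul_assoc, ← Real.mul_rpow (by positivity) hc10.le, inv_mul_cancel₀ (ne_of_gt hc10),
      Real.one_rpow, one_mul]
  calc |t - q| = (c1⁻¹) ^ ((2:ℝ)/3) * (c1 ^ ((2:ℝ)/3) * |t - q|) := h3.symm
    _ ≤ (c1⁻¹) ^ ((2:ℝ)/3) * Δ ^ ((2:ℝ)/3) := by
        rw [← h2]
        exact mul_le_mul_of_nonneg_left h1 (Real.rpow_nonneg (by positivity) _)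

/-- Hölder-`2/3` regularity of the inverse of the Marchenko–Pastur distribution
function: `|t − n_W⁻¹(s)| ≤ C·|n_W(t) − s|^{2/3}` for `t` in the bulk, where the
inverse point `q ∈ [λ₋, λ₊]` is characterized by `n_W(q) = s`. -/
theorem stmt_8 (d : ℝ) (hd0 : 0 < d) (hd1 : d < 1) :
    let lm : ℝ := (1 - Real.sqrt d) ^ 2
    let lp : ℝ := (1 + Real.sqrt d) ^ 2
    let ρ : ℝ → ℝ := fun x => (1 / (2 * Real.pi * d)) *
      Real.sqrt (max 0 ((lp - x) * (x - lm))) / x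
    let nW : ℝ → ℝ := fun E => ∫ x in Set.Iic E, ρ x
    ∃ C : ℝ, 0 < C ∧ ∀ t ∈ Set.Ioo lm lp, ∀ s ∈ Set.Icc (0 : ℝ) 1,
      ∀ q ∈ Set.Icc lm lp, nW q = s →
        |t - q| ≤ C * |nW t - s| ^ ((2 : ℝ) / 3) := by
  intro lm lp ρ nW
  exact mp_aux d hd0 hd1
end

section
/- Let f : ℝ → [0,1] be nondecreasing and g : ℝ → [0,1] be L-Lipschitz nondecreasing. Suppose at some point E, f(E) − g(E) = Δ > 0. Then ∫_E^{E+Δ/(2L)} |f(E') − g(E')| dE' ≥ Δ²/(8L). -/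
open MeasureTheory

/-- A pointwise gap `f(E) − g(E) = Δ > 0` between a nondecreasing function `f` and an
`L`-Lipschitz nondecreasing function `g` (both `[0,1]`-valued) forces an `L¹` lower
bound: `∫_E^{E+Δ/(2L)} |f − g| ≥ Δ²/(8L)`. -/
theorem stmt_16 (L Δ E : ℝ) (hL : 0 < L) (hΔ : 0 < Δ)
    (f g : ℝ → ℝ) (hf : Monotone f) (hfr : ∀ x, f x ∈ Set.Icc (0 : ℝ) 1)
    (hg : Monotone g) (hglip : LipschitzWith (Real.toNNReal L) g)
    (hgr : ∀ x, g x ∈ Set.Icc (0 : ℝ) 1)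
    (hgap : f E - g E = Δ) :
    Δ ^ 2 / (8 * L) ≤ ∫ x in Set.Icc E (E + Δ / (2 * L)), |f x - g x| := by
  set b := E + Δ / (2 * L) with hb
  have hδpos : 0 < Δ / (2 * L) := by positivity
  have hEb : E ≤ b := by simp [hb]; linarith
  have hcomp : IsCompact (Set.Icc E b) := isCompact_Icc
  have hfint : IntegrableOn f (Set.Icc E b) :=
    (hf.monotoneOn _).integrableOn_isCompact hcomp
  have hgint : IntegrableOn g (Set.Icc E b) :=
    (hg.monotoneOn _).integrableOn_isCompact hcomp
  have hint : IntegrableOn (fun x => |f x - g x|) (Set.Icc E b) :=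
    (hfint.sub hgint).abs
  have hlow : ∀ x ∈ Set.Icc E b, Δ / 2 ≤ |f x - g x| := by
    intro x hx
    have h1 : f E ≤ f x := hf hx.1
    have h2 : g x - g E ≤ L * (x - E) := by
      have := hglip.dist_le_mul x E
      rw [Real.dist_eq, Real.dist_eq] at this
      have hc : ((Real.toNNReal L : NNReal) : ℝ) = L := Real.coe_toNNReal L hL.le
      rw [hc] at this
      calc g x - g E ≤ |g x - g E| := le_abs_self _
        _ ≤ L * |x - E| := this
        _ = L * (x - E) := by rw [abs_of_nonneg (by linarith [hx.1])]
    have h3 : x - E ≤ Δ / (2 * L) := by have := hx.2; rw [hb] at this; linarith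
    have h4 : L * (x - E) ≤ Δ / 2 := by
      calc L * (x - E) ≤ L * (Δ / (2 * L)) := by nlinarith
        _ = Δ / 2 := by field_simp
    have : Δ / 2 ≤ f x - g x := by linarith
    calc Δ / 2 ≤ f x - g x := this
      _ ≤ |f x - g x| := le_abs_self _
  have hmeas : MeasurableSet (Set.Icc E b) := measurableSet_Icc
  have hvol : (volume (Set.Icc E b)).toReal = Δ / (2 * L) := by
    rw [Real.volume_Icc, show b - E = Δ / (2 * L) by rw [hb]; ring,
      ENNReal.toReal_ofReal hδpos.le]
  have := setIntegral_ge_of_const_le_real hmeas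
    (by rw [Real.volume_Icc]; exact ENNReal.ofReal_ne_top) hlow hint
  rw [Measure.real, hvol] at this
  have heq : Δ / 2 * (Δ / (2 * L)) = Δ ^ 2 / (4 * L) := by field_simp; ring
  rw [heq] at this
  have : Δ ^ 2 / (8 * L) ≤ Δ ^ 2 / (4 * L) := by
    apply div_le_div_of_nonneg_left (by positivity) (by positivity) (by linarith)
  linarith [setIntegral_ge_of_const_le_real hmeas
    (by rw [Real.volume_Icc]; exact ENNReal.ofReal_ne_top) hlow hint]
end

section
/- Let x* = (x₁*, …, x_N*) and γ = (γ₁, …, γ_N) be nondecreasing sequences of reals with |γ_i − γ_j| ≤ C·N^{−2/3}·|i−j| for all i, j. Suppose |x*_{j₀} − γ_{j₀}| ≥ N^{−1/10} for some j₀ with N^{1/2} ≤ j₀ ≤ N − N^{1/2}. Then ∑_{j=1}^N (x*_j − γ_j)² ≥ c·N^{3/10} for some constant c > 0 depending only on C, provided N is sufficiently large. -/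
lemma stmt17_aux {N K : ℕ} (f : Fin N → ℝ) (hf : ∀ j, 0 ≤ f j) (q : ℝ)
    (e : ℕ → Fin N)
    (hinj : ∀ m < K, ∀ m' < K, e m = e m' → m = m')
    (hq : ∀ m < K, q ≤ f (e m)) :
    (K : ℝ) * q ≤ ∑ j, f j := by
  have h1 : (K:ℝ) * q ≤ ∑ m ∈ Finset.range K, f (e m) := by
    calc (K:ℝ) * q = ∑ _m ∈ Finset.range K, q := by
          rw [Finset.sum_const, Finset.card_range, nsmul_eq_mul]
      _ ≤ _ := Finset.sum_le_sum fun m hm => hq m (Finset.mem_range.mp hm)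
  have h2 : ∑ m ∈ Finset.range K, f (e m) = ∑ j ∈ (Finset.range K).image e, f j :=
    (Finset.sum_image (fun m hm m' hm' =>
      hinj m (Finset.mem_range.mp hm) m' (Finset.mem_range.mp hm'))).symm
  refine le_trans h1 (h2 ▸ Finset.sum_le_sum_of_subset_of_nonneg
    (Finset.subset_univ _) fun j _ _ => hf j)

/-- If the ordered points `x*` deviate from the classical locations `γ` by at least
`N^{-1/10}` at some bulk index `j₀` (with the `γ` satisfying a Lipschitz-type bound
`|γ_i − γ_j| ≤ C·N^{−2/3}·|i−j|`), then `∑ (x*_j − γ_j)² ≥ c·N^{3/10}` for large `N`. -/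
theorem stmt_17 (C : ℝ) (hC : 0 < C) :
    ∃ c : ℝ, 0 < c ∧ ∃ N₀ : ℕ, ∀ N : ℕ, N₀ ≤ N →
      ∀ x γ : Fin N → ℝ, Monotone x → Monotone γ →
      (∀ i j : Fin N, |γ i - γ j| ≤ C * (N : ℝ) ^ (-(2 : ℝ) / 3) * |(i : ℝ) - (j : ℝ)|) →
      ∀ j₀ : Fin N,
        Real.sqrt N ≤ (j₀ : ℝ) + 1 → (j₀ : ℝ) + 1 ≤ (N : ℝ) - Real.sqrt N →
        (N : ℝ) ^ (-(1 : ℝ) / 10) ≤ |x j₀ - γ j₀| →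
        c * (N : ℝ) ^ ((3 : ℝ) / 10) ≤ ∑ j, (x j - γ j) ^ 2 := by
  refine ⟨1/8, by norm_num, ⌈(2*C)^15⌉₊ + 16, ?_⟩
  intro N hN x γ hx hγ hlip j₀ hlo hhi hdev
  set R : ℝ := (N : ℝ) with hRdef
  have hN16 : (16:ℕ) ≤ N := le_trans (Nat.le_add_left _ _) hN
  have hRpos : (0:ℝ) < R := by
    have h : (0:ℕ) < N := by omega
    rw [hRdef]; exact_mod_cast h
  have hR16 : (16:ℝ) ≤ R := by rw [hRdef]; exact_mod_cast hN16
  have h2C : (2*C)^15 ≤ R := by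
    have h1 : ((⌈(2*C)^15⌉₊ : ℕ) : ℝ) ≤ R := by
      have h : ⌈(2*C)^15⌉₊ ≤ N := by omega
      rw [hRdef]; exact_mod_cast h
    exact le_trans (Nat.le_ceil _) h1
  have hs4 : (4:ℝ) ≤ Real.sqrt R := by
    have h16 : Real.sqrt 16 = 4 := by
      rw [show (16:ℝ) = 4^2 by norm_num, Real.sqrt_sq (by norm_num)]
    calc (4:ℝ) = Real.sqrt 16 := h16.symm
      _ ≤ Real.sqrt R := Real.sqrt_le_sqrt hR16
  set K : ℕ := ⌊Real.sqrt R⌋₊ with hKdef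
  have hKle : (K:ℝ) ≤ Real.sqrt R := Nat.floor_le (Real.sqrt_nonneg _)
  have hKge : Real.sqrt R - 1 ≤ (K:ℝ) := by
    have := Nat.lt_floor_add_one (Real.sqrt R)
    linarith
  have hKhalf : Real.sqrt R / 2 ≤ (K:ℝ) := by linarith
  -- key Lipschitz smallness: C * R^(-2/3) * √R ≤ (1/2) R^(-1/10)
  have h15 : 2*C ≤ R ^ ((1:ℝ)/15) := by
    have h := Real.rpow_le_rpow (by positivity) h2C (by norm_num : (0:ℝ) ≤ 1/15)
    rwa [← Real.rpow_natCast (2*C) 15, ← Real.rpow_mul (by positivity),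
      show ((15:ℕ):ℝ) * (1/15) = 1 by norm_num, Real.rpow_one] at h
  have hA : C * R ^ (-(2:ℝ)/3) * Real.sqrt R ≤ (1/2) * R ^ (-(1:ℝ)/10) := by
    have hCle : C ≤ (1/2) * R ^ ((1:ℝ)/15) := by linarith
    have h6 : (0:ℝ) < R ^ (-(1:ℝ)/6) := Real.rpow_pos_of_pos hRpos _
    calc C * R ^ (-(2:ℝ)/3) * Real.sqrt R
        = C * R ^ (-(1:ℝ)/6) := by
          rw [Real.sqrt_eq_rpow, mul_assoc, ← Real.rpow_add hRpos]
          norm_num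
      _ ≤ ((1/2) * R ^ ((1:ℝ)/15)) * R ^ (-(1:ℝ)/6) :=
          mul_le_mul_of_nonneg_right hCle h6.le
      _ = (1/2) * R ^ (-(1:ℝ)/10) := by
          rw [mul_assoc, ← Real.rpow_add hRpos]
          norm_num
  have hq_pos : (0:ℝ) < (1/2) * R ^ (-(1:ℝ)/10) := by positivity
  have hsq : ((1/2) * R ^ (-(1:ℝ)/10))^2 = (1/4) * R ^ (-(1:ℝ)/5) := by
    rw [mul_pow, ← Real.rpow_natCast (R ^ (-(1:ℝ)/10)) 2, ← Real.rpow_mul hRpos.le]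
    norm_num
  have hCR : (0:ℝ) ≤ C * R ^ (-(2:ℝ)/3) := by positivity
  have hfin : (1/8) * R ^ ((3:ℝ)/10) ≤ (K:ℝ) * ((1/4) * R ^ (-(1:ℝ)/5)) := by
    have hqq : (0:ℝ) ≤ (1/4) * R ^ (-(1:ℝ)/5) := by positivity
    have h1 : Real.sqrt R / 2 * ((1/4) * R ^ (-(1:ℝ)/5)) ≤
        (K:ℝ) * ((1/4) * R ^ (-(1:ℝ)/5)) :=
      mul_le_mul_of_nonneg_right hKhalf hqq
    have h2 : Real.sqrt R * R ^ (-(1:ℝ)/5) = R ^ ((3:ℝ)/10) := by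
      rw [Real.sqrt_eq_rpow, ← Real.rpow_add hRpos]
      norm_num
    nlinarith [h1, h2]
  rcases le_abs.mp hdev with hup | hdn
  · -- upward deviation; use window above j₀
    have hmN : ∀ m, m < K → (j₀ : ℕ) + m < N := by
      intro m hm
      have hmr : (m:ℝ) < (K:ℝ) := by exact_mod_cast hm
      have hlt : ((j₀:ℕ) + m : ℝ) < R := by linarith
      rw [hRdef] at hlt
      exact_mod_cast hlt
    set e : ℕ → Fin N :=
      fun m => if h : (j₀:ℕ) + m < N then ⟨(j₀:ℕ) + m, h⟩ else j₀ with hedef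
    have heval : ∀ m (hm : m < K), e m = ⟨(j₀:ℕ) + m, hmN m hm⟩ := by
      intro m hm
      simp only [hedef, dif_pos (hmN m hm)]
    refine le_trans hfin (stmt17_aux _ (fun j => sq_nonneg _) _ e ?_ ?_)
    · intro m hm m' hm' hee
      rw [heval m hm, heval m' hm'] at hee
      have := Fin.mk.injEq .. ▸ hee
      omega
    · intro m hm
      have hEm : ((e m : Fin N) : ℕ) = (j₀:ℕ) + m := by rw [heval m hm]
      have hxm : x j₀ ≤ x (e m) := hx (by rw [Fin.le_def, hEm]; omega)
      have hmr : (m:ℝ) ≤ Real.sqrt R := by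
        have : (m:ℝ) < (K:ℝ) := by exact_mod_cast hm
        linarith
      have hlipm := hlip (e m) j₀
      have hcast : ((e m : Fin N) : ℝ) = (j₀:ℝ) + m := by
        rw [show ((e m : Fin N) : ℝ) = (((e m : Fin N) : ℕ) : ℝ) from rfl, hEm]
        push_cast; ring
      rw [hcast, show (j₀:ℝ) + m - (j₀:ℝ) = (m:ℝ) by ring,
        abs_of_nonneg (by positivity : (0:ℝ) ≤ (m:ℝ))] at hlipm
      have hg : γ (e m) - γ j₀ ≤ (1/2) * R ^ (-(1:ℝ)/10) := by
        have h1 : γ (e m) - γ j₀ ≤ C * R ^ (-(2:ℝ)/3) * m :=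
          le_trans (le_abs_self _) hlipm
        have h2 : C * R ^ (-(2:ℝ)/3) * m ≤ C * R ^ (-(2:ℝ)/3) * Real.sqrt R :=
          mul_le_mul_of_nonneg_left hmr hCR
        linarith
      have hterm : (1/2) * R ^ (-(1:ℝ)/10) ≤ x (e m) - γ (e m) := by linarith
      calc (1/4) * R ^ (-(1:ℝ)/5) = ((1/2) * R ^ (-(1:ℝ)/10))^2 := hsq.symm
        _ ≤ (x (e m) - γ (e m))^2 := pow_le_pow_left₀ hq_pos.le hterm 2
  · -- downward deviation; use window below j₀
    have hdn' : R ^ (-(1:ℝ)/10) ≤ γ j₀ - x j₀ := by linarith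
    have hKj : K ≤ (j₀:ℕ) + 1 := by
      have : (K:ℝ) ≤ ((j₀:ℕ):ℝ) + 1 := le_trans hKle hlo
      exact_mod_cast this
    set e : ℕ → Fin N :=
      fun m => ⟨(j₀:ℕ) - m, lt_of_le_of_lt (Nat.sub_le _ _) j₀.isLt⟩ with hedef
    refine le_trans hfin (stmt17_aux _ (fun j => sq_nonneg _) _ e ?_ ?_)
    · intro m hm m' hm' hee
      have := Fin.mk.injEq .. ▸ hee
      simp only [hedef, Fin.mk.injEq] at hee
      omega
    · intro m hm
      have hmj : m ≤ (j₀:ℕ) := by omega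
      have hEm : ((e m : Fin N) : ℕ) = (j₀:ℕ) - m := rfl
      have hxm : x (e m) ≤ x j₀ := hx (by rw [Fin.le_def, hEm]; omega)
      have hmr : (m:ℝ) ≤ Real.sqrt R := by
        have : (m:ℝ) < (K:ℝ) := by exact_mod_cast hm
        linarith
      have hlipm := hlip j₀ (e m)
      have hcast : ((e m : Fin N) : ℝ) = (j₀:ℝ) - m := by
        rw [show ((e m : Fin N) : ℝ) = (((e m : Fin N) : ℕ) : ℝ) from rfl, hEm,
          Nat.cast_sub hmj]
      rw [hcast, show (j₀:ℝ) - ((j₀:ℝ) - m) = (m:ℝ) by ring,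
        abs_of_nonneg (by positivity : (0:ℝ) ≤ (m:ℝ))] at hlipm
      have hg : γ j₀ - γ (e m) ≤ (1/2) * R ^ (-(1:ℝ)/10) := by
        have h1 : γ j₀ - γ (e m) ≤ C * R ^ (-(2:ℝ)/3) * m :=
          le_trans (le_abs_self _) hlipm
        have h2 : C * R ^ (-(2:ℝ)/3) * m ≤ C * R ^ (-(2:ℝ)/3) * Real.sqrt R :=
          mul_le_mul_of_nonneg_left hmr hCR
        linarith
      have hterm : (1/2) * R ^ (-(1:ℝ)/10) ≤ γ (e m) - x (e m) := by linarith
      calc (1/4) * R ^ (-(1:ℝ)/5) = ((1/2) * R ^ (-(1:ℝ)/10))^2 := hsq.symm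
        _ ≤ (γ (e m) - x (e m))^2 := pow_le_pow_left₀ hq_pos.le hterm 2
        _ = (x (e m) - γ (e m))^2 := by ring
end

section
/- Let λ_j ≥ 0 be real numbers and z = E + iη with E ≥ λ₋/2 > 0 and 0 < η ≤ E/2. Then (1/M²)·∑_α λ_α²/|λ_α − z|² ≤ (C·K)/(M·η) provided that for every dyadic interval I around E of length 2^k·η (k ≥ 0) the number of λ_α in I is at most K·M·2^k·η, and the λ_α are bounded by an absolute constant. -/
open Finset

set_option maxHeartbeats 1000000 in
/-- Dyadic-decomposition bound: if the `λ_α ∈ [0, Λ₀]` have local density at most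
`K·M` on every dyadic scale `2^k·η` around `E`, then
`(1/M²)·∑ λ_α²/((λ_α−E)²+η²) ≤ C·K/(M·η)` with `C` depending only on `Λ₀`. -/
theorem stmt_19 (Λ₀ : ℝ) (hΛ₀ : 0 < Λ₀) :
    ∃ C : ℝ, 0 < C ∧ ∀ (M n : ℕ) (lam : Fin n → ℝ) (lamMinus E η K : ℝ),
      1 ≤ M →
      (∀ α, 0 ≤ lam α ∧ lam α ≤ Λ₀) →
      0 < lamMinus → lamMinus / 2 ≤ E → 0 < η → η ≤ E / 2 → 1 ≤ K →
      (∀ k : ℕ, ((univ.filter fun α => |lam α - E| ≤ 2 ^ k * η).card : ℝ) ≤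
        K * M * 2 ^ k * η) →
      (1 / (M : ℝ) ^ 2) * ∑ α, lam α ^ 2 / ((lam α - E) ^ 2 + η ^ 2) ≤
        C * K / (M * η) := by
  refine ⟨5 * Λ₀ ^ 2, by positivity, ?_⟩
  intro M n lam lamMinus E η K hM hlam hlm hlmE hη hηE hK hcard
  have hMpos : (0:ℝ) < M := by exact_mod_cast Nat.lt_of_lt_of_le Nat.zero_lt_one hM
  have hE0 : 0 < E := by linarith
  have hK0 : (0:ℝ) < K := by linarith
  set B := Λ₀ ^ 2 * K * M / η with hB
  have hB0 : 0 < B := by positivity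
  have key : ∀ N : ℕ,
      ∑ α ∈ univ.filter (fun α => |lam α - E| ≤ 2 ^ N * η),
        lam α ^ 2 / ((lam α - E) ^ 2 + η ^ 2) ≤ B * (5 - 4 * ((2:ℝ)⁻¹) ^ N) := by
    intro N
    induction N with
    | zero =>
      have h1 : ∀ α ∈ univ.filter (fun α => |lam α - E| ≤ 2 ^ 0 * η),
          lam α ^ 2 / ((lam α - E) ^ 2 + η ^ 2) ≤ Λ₀ ^ 2 / η ^ 2 := by
        intro α _
        have h := hlam α
        apply div_le_div₀ (by positivity)
          (by nlinarith [h.1, h.2]) (by positivity) (by nlinarith [sq_nonneg (lam α - E)])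
      calc ∑ α ∈ univ.filter (fun α => |lam α - E| ≤ 2 ^ 0 * η),
            lam α ^ 2 / ((lam α - E) ^ 2 + η ^ 2)
          ≤ (univ.filter (fun α => |lam α - E| ≤ 2 ^ 0 * η)).card • (Λ₀ ^ 2 / η ^ 2) :=
            Finset.sum_le_card_nsmul _ _ _ h1
        _ = ((univ.filter (fun α => |lam α - E| ≤ 2 ^ 0 * η)).card : ℝ) * (Λ₀ ^ 2 / η ^ 2) := by
            rw [nsmul_eq_mul]
        _ ≤ (K * M * 2 ^ 0 * η) * (Λ₀ ^ 2 / η ^ 2) := by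
            apply mul_le_mul_of_nonneg_right (hcard 0) (by positivity)
        _ = B * 1 := by
            rw [hB]; field_simp
        _ ≤ B * (5 - 4 * ((2:ℝ)⁻¹) ^ 0) := by norm_num
    | succ N ih =>
      set SN := univ.filter (fun α => |lam α - E| ≤ 2 ^ N * η) with hSN
      set SN1 := univ.filter (fun α => |lam α - E| ≤ 2 ^ (N+1) * η) with hSN1
      have hsub : SN ⊆ SN1 := by
        intro α hα
        simp only [hSN, hSN1, mem_filter, mem_univ, true_and] at *
        have : (2:ℝ) ^ N * η ≤ 2 ^ (N+1) * η := by
          apply mul_le_mul_of_nonneg_right _ hη.le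
          exact pow_le_pow_right₀ one_le_two (Nat.le_succ N)
        linarith
      have hsplit : ∑ α ∈ SN1, lam α ^ 2 / ((lam α - E) ^ 2 + η ^ 2)
          = ∑ α ∈ SN1 \ SN, lam α ^ 2 / ((lam α - E) ^ 2 + η ^ 2)
            + ∑ α ∈ SN, lam α ^ 2 / ((lam α - E) ^ 2 + η ^ 2) :=
        (Finset.sum_sdiff hsub).symm
      have hterm : ∀ α ∈ SN1 \ SN,
          lam α ^ 2 / ((lam α - E) ^ 2 + η ^ 2) ≤ Λ₀ ^ 2 / ((2:ℝ) ^ N * η) ^ 2 := by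
        intro α hα
        rw [Finset.mem_sdiff] at hα
        have h2 : ¬ (|lam α - E| ≤ 2 ^ N * η) := by
          have := hα.2
          simpa [hSN] using this
        push_neg at h2
        have h3 : ((2:ℝ) ^ N * η) ^ 2 ≤ (lam α - E) ^ 2 := by
          have := sq_abs (lam α - E)
          nlinarith [abs_nonneg (lam α - E), h2, mul_pos (pow_pos (by norm_num : (0:ℝ)<2) N) hη]
        have h := hlam α
        apply div_le_div₀ (by positivity) (by nlinarith [h.1, h.2]) (by positivity)
          (by nlinarith [sq_nonneg η])
      have hann : ∑ α ∈ SN1 \ SN, lam α ^ 2 / ((lam α - E) ^ 2 + η ^ 2)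
          ≤ (K * M * 2 ^ (N+1) * η) * (Λ₀ ^ 2 / ((2:ℝ) ^ N * η) ^ 2) := by
        calc ∑ α ∈ SN1 \ SN, lam α ^ 2 / ((lam α - E) ^ 2 + η ^ 2)
            ≤ (SN1 \ SN).card • (Λ₀ ^ 2 / ((2:ℝ) ^ N * η) ^ 2) :=
              Finset.sum_le_card_nsmul _ _ _ hterm
          _ = ((SN1 \ SN).card : ℝ) * (Λ₀ ^ 2 / ((2:ℝ) ^ N * η) ^ 2) := by
              rw [nsmul_eq_mul]
          _ ≤ (K * M * 2 ^ (N+1) * η) * (Λ₀ ^ 2 / ((2:ℝ) ^ N * η) ^ 2) := by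
              apply mul_le_mul_of_nonneg_right _ (by positivity)
              calc ((SN1 \ SN).card : ℝ) ≤ (SN1.card : ℝ) := by
                    exact_mod_cast Finset.card_le_card (Finset.sdiff_subset)
                _ ≤ K * M * 2 ^ (N+1) * η := hcard (N+1)
      have hval : (K * M * 2 ^ (N+1) * η) * (Λ₀ ^ 2 / ((2:ℝ) ^ N * η) ^ 2)
          = B * (2 * ((2:ℝ)⁻¹) ^ N) := by
        rw [hB, inv_pow]
        have h2N : ((2:ℝ) ^ N) ≠ 0 := by positivity
        field_simp
        ring
      rw [hsplit]
      have : B * (2 * ((2:ℝ)⁻¹) ^ N) + B * (5 - 4 * ((2:ℝ)⁻¹) ^ N)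
          = B * (5 - 4 * ((2:ℝ)⁻¹) ^ (N+1)) := by ring
      rw [hval] at hann
      linarith [ih]
  -- choose N large enough that the filter is everything
  obtain ⟨N, hN⟩ := pow_unbounded_of_one_lt ((Λ₀ + E) / η) (by norm_num : (1:ℝ) < 2)
  have hNη : Λ₀ + E ≤ 2 ^ N * η := by
    rw [div_lt_iff₀ hη] at hN
    linarith
  have hall : univ.filter (fun α => |lam α - E| ≤ 2 ^ N * η) = (univ : Finset (Fin n)) := by
    apply Finset.filter_true_of_mem
    intro α _
    have h := hlam α
    rw [abs_le]
    constructor <;> nlinarith [h.1, h.2]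
  have hsum : ∑ α, lam α ^ 2 / ((lam α - E) ^ 2 + η ^ 2) ≤ 5 * B := by
    have := key N
    rw [hall] at this
    have h5 : B * (5 - 4 * ((2:ℝ)⁻¹) ^ N) ≤ 5 * B := by
      have hx : (0:ℝ) ≤ B * (4 * ((2:ℝ)⁻¹) ^ N) := by positivity
      nlinarith [hx]
    linarith
  have hfin : (1 / (M : ℝ) ^ 2) * (5 * B) = 5 * Λ₀ ^ 2 * K / (M * η) := by
    rw [hB]; field_simp
  calc (1 / (M : ℝ) ^ 2) * ∑ α, lam α ^ 2 / ((lam α - E) ^ 2 + η ^ 2)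
      ≤ (1 / (M : ℝ) ^ 2) * (5 * B) := by
        apply mul_le_mul_of_nonneg_left hsum (by positivity)
    _ = 5 * Λ₀ ^ 2 * K / (M * η) := hfin
end
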